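/- Let r be a real number and let n, k be integers with n - 1 ≥ k ≥ 0. Then the extended r-central factorial numbers of the first kind satisfy the recurrence t_r(n+1+r, k+r) = t_r(n-1+r, k-2+r) + 2r · t_r(n-1+r, k-1+r) + (r² - ((n-1)/2)²) · t_r(n-1+r, k+r). -/
import Mathlib


open Polynomial

/-- The polynomial `(X + r)^{[n]}`: the central factorial of `X + r`, i.e.
`(X+r)^{[0]} = 1` and `(X+r)^{[n]} = (X+r) ∏_{i=1}^{n-1} (X + r + n/2 - i)` for `n ≥ 1`. -/
noncomputable def centralFactorialPoly (r : ℝ) : ℕ → Polynomial ℝ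
  | 0 => 1
  | n + 1 => (X + C r) *
      ∏ i ∈ Finset.range n, (X + C r + C (((n : ℝ) + 1) / 2) - C ((i : ℝ) + 1))

/-- The extended `r`-central factorial numbers of the first kind `t_r(n+r, k+r)`, defined
as the coefficients in `(x+r)^{[n]} = ∑_{k=0}^{n} t_r(n+r, k+r) x^k`, with the convention
that they vanish for `k < 0` (or `n < 0`), and automatically vanish for `k > n`. -/
noncomputable def rcentralt (r : ℝ) (n k : ℤ) : ℝ :=
  if 0 ≤ n ∧ 0 ≤ k then (centralFactorialPoly r n.toNat).coeff k.toNat else 0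

lemma cf_key (r : ℝ) (m : ℕ) :
    centralFactorialPoly r (m + 2) =
      ((X + C r) ^ 2 - C (((m : ℝ) / 2) ^ 2)) * centralFactorialPoly r m := by
  cases m with
  | zero =>
      simp [centralFactorialPoly]
      ring
  | succ l =>
      have e1 : centralFactorialPoly r (l + 1 + 2) = (X + C r) *
          ∏ i ∈ Finset.range (l + 2),
            (X + C r + C ((((l + 2 : ℕ) : ℝ) + 1) / 2) - C ((i : ℝ) + 1)) := rfl
      have e2 : centralFactorialPoly r (l + 1) = (X + C r) *
          ∏ i ∈ Finset.range l,
            (X + C r + C (((l : ℝ) + 1) / 2) - C ((i : ℝ) + 1)) := rfl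
      rw [e1, e2, Finset.prod_range_succ', Finset.prod_range_succ]
      have h1 : ∀ i ∈ Finset.range l,
          (X + C r + C ((((l + 2 : ℕ) : ℝ) + 1) / 2) - C ((((i : ℕ) + 1 : ℕ) : ℝ) + 1)) =
          (X + C r + C (((l : ℝ) + 1) / 2) - C ((i : ℝ) + 1)) := by
        intro i _
        rw [add_sub_assoc, add_sub_assoc, ← C_sub, ← C_sub]
        congr 1
        push_cast
        ring
      rw [Finset.prod_congr rfl h1]
      have hc : X + C r + C ((((l + 2 : ℕ) : ℝ) + 1) / 2) - C ((((l : ℕ) + 1 : ℕ) : ℝ) + 1)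
          = X + C r - C (((l : ℝ) + 1) / 2) := by
        rw [add_sub_assoc, ← C_sub, sub_eq_add_neg (X + C r), ← C_neg]
        congr 1
        push_cast
        ring
      rw [hc]
      have hd : X + C r + C ((((l + 2 : ℕ) : ℝ) + 1) / 2) - C (((0 : ℕ) : ℝ) + 1)
          = X + C r + C (((l : ℝ) + 1) / 2) := by
        rw [add_sub_assoc, ← C_sub]
        congr 1
        push_cast
        ring
      rw [hd]
      have he : C (((↑(l + 1) : ℝ) / 2) ^ 2) = (C (((l : ℝ) + 1) / 2)) ^ 2 := by
        rw [← C_pow]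
        congr 1
        push_cast
        ring
      rw [he]
      ring

lemma coeff_helper (p : Polynomial ℝ) (r c : ℝ) (j : ℕ) :
    (((X + C r) ^ 2 - C c) * p).coeff j =
      (if 2 ≤ j then p.coeff (j - 2) else 0) +
        2 * r * (if 1 ≤ j then p.coeff (j - 1) else 0) + (r ^ 2 - c) * p.coeff j := by
  have expand : ((X + C r) ^ 2 - C c) * p =
      p * X ^ 2 + C (2 * r) * (p * X ^ 1) + C (r ^ 2 - c) * p := by
    simp only [C_sub, C_pow, C_mul, pow_one]
    have : (C (2 : ℝ)) = 2 := map_ofNat C 2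
    rw [this]
    ring
  rw [expand, coeff_add, coeff_add, coeff_C_mul, coeff_C_mul, coeff_mul_X_pow',
    coeff_mul_X_pow']

/-- For a real `r` and integers `n, k` with `n - 1 ≥ k ≥ 0`:
`t_r(n+1+r, k+r) = t_r(n-1+r, k-2+r) + 2r·t_r(n-1+r, k-1+r) + (r² - ((n-1)/2)²)·t_r(n-1+r, k+r)`. -/
theorem rcentralt_recurrence (r : ℝ) (n k : ℤ) (hk : 0 ≤ k) (hn : k ≤ n - 1) :
    rcentralt r (n + 1) k =
      rcentralt r (n - 1) (k - 2) + 2 * r * rcentralt r (n - 1) (k - 1) +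
        (r ^ 2 - (((n : ℝ) - 1) / 2) ^ 2) * rcentralt r (n - 1) k := by
  have hn1 : (1 : ℤ) ≤ n := by omega
  set m : ℕ := (n - 1).toNat with hm
  have hnm : n = (m : ℤ) + 1 := by omega
  set j : ℕ := k.toNat with hj
  have hkj : k = (j : ℤ) := by omega
  have h1 : (n + 1).toNat = m + 2 := by omega
  have hR : ((n : ℝ) - 1) / 2 = (m : ℝ) / 2 := by
    have : (n : ℝ) = (m : ℝ) + 1 := by exact_mod_cast congrArg (Int.cast : ℤ → ℝ) hnm
    rw [this]; ring
  have lhs : rcentralt r (n + 1) k = (centralFactorialPoly r (m + 2)).coeff j := by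
    rw [rcentralt, if_pos ⟨by omega, hk⟩, h1]
  rw [lhs, cf_key, coeff_helper, hR]
  have t0 : rcentralt r (n - 1) k = (centralFactorialPoly r m).coeff j := by
    rw [rcentralt, if_pos ⟨by omega, hk⟩]
  have t1 : rcentralt r (n - 1) (k - 1) =
      if 1 ≤ j then (centralFactorialPoly r m).coeff (j - 1) else 0 := by
    by_cases h : 1 ≤ k
    · rw [rcentralt, if_pos ⟨by omega, by omega⟩, if_pos (by omega)]
      congr 1 <;> omega
    · rw [rcentralt, if_neg (by omega), if_neg (by omega)]
  have t2 : rcentralt r (n - 1) (k - 2) =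
      if 2 ≤ j then (centralFactorialPoly r m).coeff (j - 2) else 0 := by
    by_cases h : 2 ≤ k
    · rw [rcentralt, if_pos ⟨by omega, by omega⟩, if_pos (by omega)]
      congr 1 <;> omega
    · rw [rcentralt, if_neg (by omega), if_neg (by omega)]
  rw [t0, t1, t2]
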